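/- arXiv:2201.09688 — 2 statements merged into one kernel-verified Lean document; each statement's English description precedes it below -/
import Mathlib

section
/- Let E be a field of characteristic p, k ≥ 1 (k ≥ 2 if p = 2), and ε > 0. If f(X) ∈ E[[X]] satisfies val_X((1+p^{k+i})·f - f) ≥ p^{k+ε+i} + μ for some μ and all i ≥ 0 (where (1+p^m)·f(X) = f((1+X)^{1+p^m}-1)), then f ∈ E[[X^p]]. -/
open PowerSeries

/-- The binomial coefficient `C(z,n)` of a `p`-adic integer `z`, reduced modulo `p`. -/
noncomputable def binomMod (p : ℕ) [Fact p.Prime] (E : Type*) [Field E] [CharP E p]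
    (z : ℤ_[p]) (n : ℕ) : E :=
  ZMod.castHom dvd_rfl E (((z.appr (n + 1)).choose n : ZMod p))

/-- The power series `(1+X)^a = ∑ C(a,n) X^n ∈ E[[X]]` for `a ∈ ℤ_p`. -/
noncomputable def onePlusXPow (p : ℕ) [Fact p.Prime] (E : Type*) [Field E] [CharP E p]
    (a : ℤ_[p]) : PowerSeries E :=
  PowerSeries.mk fun n => binomMod p E a n

/-- Composition `f ∘ g` of power series (correct whenever `g` has zero constant term). -/
noncomputable def psComp {E : Type*} [CommRing E] (f g : PowerSeries E) : PowerSeries E :=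
  PowerSeries.mk fun n =>
    ∑ j ∈ Finset.range (n + 1), PowerSeries.coeff j f * PowerSeries.coeff n (g ^ j)



lemma appr_natCast {p : ℕ} [Fact p.Prime] (N t : ℕ) :
    ((N : ℤ_[p])).appr t = N % p ^ t := by
  have h1 := PadicInt.appr_spec t (N : ℤ_[p])
  have h2 : (N : ℤ_[p]) - ((N % p ^ t : ℕ) : ℤ_[p]) ∈ Ideal.span {(p : ℤ_[p]) ^ t} := by
    rw [Ideal.mem_span_singleton]
    have hle : N % p ^ t ≤ N := Nat.mod_le _ _
    have : (N : ℤ_[p]) - ((N % p ^ t : ℕ) : ℤ_[p]) = ((N - N % p ^ t : ℕ) : ℤ_[p]) := by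
      push_cast [Nat.cast_sub hle]; ring
    rw [this]
    have hdvd : p ^ t ∣ N - N % p ^ t := by
      have := Nat.div_add_mod N (p ^ t)
      exact ⟨N / p ^ t, by omega⟩
    obtain ⟨c, hc⟩ := hdvd
    exact ⟨c, by rw [hc]; push_cast; ring⟩
  have h3 := PadicInt.zmod_congr_of_sub_mem_span t (N : ℤ_[p]) _ _ h1 h2
  have h4 : ((N : ℤ_[p]).appr t) ≡ N % p ^ t [MOD p ^ t] :=
    (ZMod.natCast_eq_natCast_iff _ _ _).mp h3
  have h5 := PadicInt.appr_lt (N : ℤ_[p]) t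
  have h6 : 0 < p ^ t := pow_pos (Fact.out (p := p.Prime)).pos t
  have := h4.eq_of_lt_of_lt h5 (Nat.mod_lt _ h6)
  omega


lemma binomMod_natCast {p : ℕ} [Fact p.Prime] (E : Type*) [Field E] [CharP E p]
    (N n : ℕ) : binomMod p E (N : ℤ_[p]) n = (((N % p ^ (n + 1)).choose n : ℕ) : E) := by
  rw [binomMod, appr_natCast]
  exact map_natCast _ _

lemma onePlusXPow_eq {p : ℕ} [Fact p.Prime] (E : Type*) [Field E] [CharP E p]
    (m : ℕ) (hm : 1 ≤ m) :
    onePlusXPow p E ((1 + p ^ m : ℕ) : ℤ_[p])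
      = (1 + X) * (1 + (X : PowerSeries E) ^ (p ^ m)) := by
  have hp2 : 2 ≤ p := (Fact.out (p := p.Prime)).two_le
  have hP2 : 2 ≤ p ^ m := le_trans hp2 (Nat.le_self_pow (by omega) p)
  set P := p ^ m with hP
  have hrhs : (1 + X) * (1 + (X : PowerSeries E) ^ P)
      = 1 + X + X ^ P + X ^ (P + 1) := by
    rw [pow_succ]; ring
  rw [hrhs]
  ext n
  rw [onePlusXPow, coeff_mk, binomMod_natCast]
  have hco : (coeff n) (1 + X + X ^ P + X ^ (P + 1) : PowerSeries E)
      = (if n = 0 then 1 else 0) + (if n = 1 then 1 else 0)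
        + (if n = P then 1 else 0) + (if n = P + 1 then 1 else 0) := by
    simp [coeff_one, coeff_X, coeff_X_pow, map_add, eq_comm]
  rw [hco]
  by_cases h : n + 1 ≤ m
  · -- small n : mod is 1
    have hdvd : p ^ (n + 1) ∣ p ^ m := pow_dvd_pow p h
    obtain ⟨c, hc⟩ := hdvd
    have hq1 : 1 < p ^ (n + 1) :=
      lt_of_lt_of_le (by omega : 1 < p) (Nat.le_self_pow (Nat.succ_ne_zero n) p)
    have h1 : (1 + P) % p ^ (n + 1) = 1 := by
      rw [hP, hc, Nat.add_mul_mod_self_left]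
      exact Nat.mod_eq_of_lt hq1
    rw [show (1 + p ^ m) = 1 + P from rfl, h1]
    have hmP : m < P := (Nat.lt_pow_self (by omega) : m < p ^ m)
    have hnP : n < P := by omega
    rcases n with _ | _ | n
    · simp [show ¬(0 = P) by omega, show ¬(0 = P + 1) by omega]
    · simp [show (1:ℕ) ≠ P by omega, show (1:ℕ) ≠ P + 1 by omega, show ¬(P = 0) by omega]
    · rw [Nat.choose_eq_zero_of_lt (by omega)]
      simp [show n + 2 ≠ P by omega, show n + 2 ≠ P + 1 by omega, show ¬(n + 1 = P) by omega]
  · -- large n : mod is 1 + P itself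
    push_neg at h
    have hlt : 1 + P < p ^ (n + 1) := by
      have h1 : p ^ (m + 1) ≤ p ^ (n + 1) := Nat.pow_le_pow_right (by omega) (by omega)
      have h2 : p ^ (m + 1) = p * P := by rw [hP, pow_succ]; ring
      have h3 : 2 * P ≤ p * P := Nat.mul_le_mul_right P hp2
      omega
    rw [show (1 + p ^ m) = 1 + P from rfl, Nat.mod_eq_of_lt hlt]
    have hzero : ∀ u : ℕ, u ≠ 0 → u ≠ P → ((P.choose u : ℕ) : E) = 0 := by
      intro u hu0 huP
      by_cases hle : u ≤ P
      · refine (CharP.cast_eq_zero_iff E p _).mpr ?_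
        rw [hP]
        exact (Fact.out (p := p.Prime)).dvd_choose_pow hu0 (by rw [← hP]; exact huP)
      · rw [Nat.choose_eq_zero_of_lt (by omega)]; norm_num
    have hm1 : m ≤ n := by omega
    rcases n with _ | n
    · omega
    · rw [show 1 + P = P + 1 by ring, Nat.choose_succ_succ, Nat.cast_add]
      by_cases hn0 : n = 0
      · subst hn0
        have hPE : ((P : ℕ) : E) = 0 := by
          rw [hP]; push_cast
          rw [show ((p:ℕ):E) = 0 from CharP.cast_eq_zero E p]
          exact zero_pow (by omega)
        rw [Nat.choose_zero_right, Nat.choose_one_right]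
        simp [hPE, show (1:ℕ) ≠ P by omega, show (1:ℕ) ≠ P + 1 by omega,
          show ¬(0 = P) by omega, show ¬((1:ℕ) = P) by omega, show ¬(P = 0) by omega]
      · by_cases hc1 : n + 1 < P
        · rw [hzero n (by omega) (by omega), hzero (n+1) (by omega) (by omega)]
          simp [hn0, show n + 1 ≠ P by omega, show n + 1 ≠ P + 1 by omega,
            show ¬(n = P) by omega]
        · by_cases hc2 : n + 1 = P
          · have e1 : ((P.choose (n + 1) : ℕ) : E) = 1 := by
              rw [hc2, Nat.choose_self]; norm_num
            rw [hzero n (by omega) (by omega)]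
            simp only [Nat.succ_eq_add_one, e1, hc2]
            simp [show P ≠ 0 by omega, show P ≠ 1 by omega, show P ≠ P + 1 by omega]
          · by_cases hc3 : n = P
            · rw [hc3, Nat.choose_self, Nat.choose_eq_zero_of_lt (by omega)]
              simp [show P + 1 ≠ 0 by omega, show P + 1 ≠ 1 by omega,
                show P + 1 ≠ P by omega, show ¬(P = 0) by omega]
            · rw [Nat.choose_eq_zero_of_lt (by omega), Nat.choose_eq_zero_of_lt (by omega)]
              simp [show n + 1 ≠ 0 by omega, show n + 1 ≠ 1 by omega, hn0,
                show n + 1 ≠ P by omega, show n + 1 ≠ P + 1 by omega, hc3]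


lemma coeff_onePlusX_pow_term {E : Type*} [CommRing E] (P d j : ℕ) (hP : 2 ≤ P) (hd : d < P) :
    coeff (P + d) ((X + X ^ P + X ^ (P + 1) : PowerSeries E) ^ j)
      = (if j = P + d then 1 else 0) + (if j = d + 1 then ((d + 1 : ℕ) : E) else 0)
        + (if j = d then ((d : ℕ) : E) else 0) := by
  have hg : (X + X ^ P + X ^ (P + 1) : PowerSeries E) = X + X ^ P * (1 + X) := by
    rw [pow_succ]; ring
  rw [hg, add_pow, map_sum]
  have hterm : ∀ r ∈ Finset.range (j + 1),
      coeff (P + d) ((X : PowerSeries E) ^ r * (X ^ P * (1 + X)) ^ (j - r) * (j.choose r : PowerSeries E))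
        = (if r = j ∧ j = P + d then 1 else 0)
          + (if r + 1 = j ∧ j = d + 1 then ((d + 1 : ℕ) : E) else 0)
          + (if r + 1 = j ∧ j = d then ((d : ℕ) : E) else 0) := by
    intro r hr
    have hrj : r ≤ j := Nat.lt_succ_iff.mp (Finset.mem_range.mp hr)
    have hre : (X : PowerSeries E) ^ r * (X ^ P * (1 + X)) ^ (j - r) * (j.choose r : PowerSeries E)
        = (j.choose r) • ((1 + X : PowerSeries E) ^ (j - r) * X ^ (r + P * (j - r))) := by
      rw [nsmul_eq_mul, mul_pow, ← pow_mul, pow_add]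
      push_cast
      ring
    rw [hre, map_nsmul, coeff_mul_X_pow']
    rcases Nat.lt_or_ge (j - r) 2 with hs | hs
    · interval_cases hjr : (j - r)
      · -- s = 0, r = j
        have hrj' : r = j := by omega
        subst hrj'
        rw [Nat.choose_self, one_smul]
        simp only [Nat.mul_zero, Nat.add_zero, pow_zero]
        rcases eq_or_ne r (P + d) with hc | hc
        · rw [hc]
          simp [coeff_one, show ¬(P + d + 1 = P + d) by omega, show ¬(P + d = d + 1) by omega,
            show ¬(P + d = d) by omega]
        · split_ifs with h1 <;>
            simp [coeff_one, hc, show ¬(r + 1 = r) by omega] <;> omega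
      · -- s = 1, r + 1 = j
        have hj : j = r + 1 := by omega
        subst hj
        rw [Nat.choose_succ_self_right, pow_one]
        simp only [Nat.mul_one, nsmul_eq_mul]
        rcases Nat.lt_or_ge d r with hcase | hcase
        · rw [if_neg (by omega)]
          simp [show ¬(r = r + 1) by omega, show ¬(r + 1 = d + 1) by omega,
            show ¬(r + 1 = d) by omega, show ¬(r = d) by omega]
        · rw [if_pos (by omega), show P + d - (r + P) = d - r by omega]
          rcases eq_or_ne r d with h1 | h1
          · subst h1
            simp [coeff_one, coeff_X, show ¬(r = r + 1) by omega, show ¬(r + 1 = r) by omega]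
          · rcases eq_or_ne (r + 1) d with h2 | h2
            · rw [show d - r = 1 by omega]
              simp [coeff_one, coeff_X, h1, h2, show ¬(r = r + 1) by omega,
                show ¬(r + 1 = d + 1) by omega]
            · rw [show (coeff (d - r)) (1 + X : PowerSeries E) = 0 by
                rw [map_add, coeff_one, coeff_X, if_neg (by omega), if_neg (by omega)]; ring]
              simp [show ¬(r = r + 1) by omega, show ¬(r + 1 = d + 1) by omega, h2, h1]
    · -- s ≥ 2 : coefficient index too big
      have : ¬(r + P * (j - r) ≤ P + d) := by
        have : 2 * P ≤ P * (j - r) := by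
          calc 2 * P = P * 2 := by ring
          _ ≤ P * (j - r) := Nat.mul_le_mul_left P hs
        omega
      rw [if_neg this]
      have h1 : ¬(r = j) := by omega
      have h2 : ¬(r + 1 = j) := by omega
      simp [h1, h2]
  rw [Finset.sum_congr rfl hterm, Finset.sum_add_distrib, Finset.sum_add_distrib]
  congr 1
  · congr 1
    · by_cases h1 : j = P + d <;> simp [h1]
    · by_cases h2 : j = d + 1
      · subst h2; simp
      · simp [h2]
  · by_cases h3 : j = d
    · subst h3
      rcases j with _ | j' <;> simp
    · simp [h3]

lemma coeff_psComp_special {E : Type*} [CommRing E] (f : PowerSeries E) (P d : ℕ)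
    (hP : 2 ≤ P) (hd : d < P) :
    coeff (P + d) (psComp f (X + X ^ P + X ^ (P + 1) : PowerSeries E))
      = coeff (P + d) f + ((d + 1 : ℕ) : E) * coeff (d + 1) f
        + ((d : ℕ) : E) * coeff d f := by
  rw [psComp, coeff_mk]
  rw [Finset.sum_congr rfl (fun j hj => by rw [coeff_onePlusX_pow_term P d j hP hd])]
  simp only [mul_add, mul_ite, mul_zero, mul_one]
  rw [Finset.sum_add_distrib, Finset.sum_add_distrib,
    Finset.sum_ite_eq' (Finset.range (P + d + 1)) (P + d) (fun j => coeff j f),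
    Finset.sum_ite_eq' (Finset.range (P + d + 1)) (d + 1)
      (fun j => coeff j f * ((d + 1 : ℕ) : E)),
    Finset.sum_ite_eq' (Finset.range (P + d + 1)) d
      (fun j => coeff j f * ((d : ℕ) : E))]
  rw [if_pos (Finset.mem_range.mpr (by omega)), if_pos (Finset.mem_range.mpr (by omega)),
    if_pos (Finset.mem_range.mpr (by omega))]
  ring


/-- Prop `levelzer`: if `f ∈ E[[X]]` satisfies
`val_X ((1+p^{k+i})·f - f) ≥ p^{k+ε+i} + μ` for all `i ≥ 0` (with `ε > 0`), where
`(1+p^m)·f = f((1+X)^{1+p^m} - 1)`, then `f ∈ E[[X^p]]`. -/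
theorem superHolder_eps_implies_in_Xp
    {p : ℕ} [Fact p.Prime] {E : Type*} [Field E] [CharP E p]
    (k : ℕ) (hk : 1 ≤ k) (hk2 : p = 2 → 2 ≤ k)
    (eps mu : ℝ) (heps : 0 < eps)
    (f : PowerSeries E)
    (hf : ∀ i c : ℕ, (c : ℝ) ≤ (p : ℝ) ^ ((k : ℝ) + eps + (i : ℝ)) + mu →
      (X : PowerSeries E) ^ c ∣
        (psComp f (onePlusXPow p E (1 + (p : ℤ_[p]) ^ (k + i)) - 1) - f)) :
    ∀ j : ℕ, ¬ p ∣ j → PowerSeries.coeff j f = 0 := by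
  have hp2 : 2 ≤ p := (Fact.out (p := p.Prime)).two_le
  have hq1 : (1:ℝ) < (p:ℝ) := by exact_mod_cast hp2.trans_lt' one_lt_two
  have key : ∀ d : ℕ,
      ((d + 1 : ℕ) : E) * coeff (d + 1) f + ((d : ℕ) : E) * coeff d f = 0 := by
    intro d
    have hδ : (0:ℝ) < (p:ℝ) ^ eps - 1 := by
      have h1 : (1:ℝ) < (p:ℝ) ^ eps :=
        Real.one_lt_rpow_iff_of_pos (by positivity) |>.mpr (Or.inl ⟨hq1, heps⟩)
      linarith
    obtain ⟨i, hi⟩ := pow_unbounded_of_one_lt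
      (max ((d:ℝ) + 1) (((d:ℝ) + 2 - mu) / ((p:ℝ) ^ eps - 1))) hq1
    set P := p ^ (k + i) with hPdef
    have hPi : ((p:ℝ)) ^ i ≤ (P:ℝ) := by
      have h1 : p ^ i ≤ p ^ (k + i) := Nat.pow_le_pow_right (by omega) (by omega)
      exact_mod_cast h1
    have hdP : d < P := by
      have h1 : (d:ℝ) + 1 ≤ (p:ℝ) ^ i := le_of_lt (lt_of_le_of_lt (le_max_left _ _) hi)
      have h2 : (d:ℝ) < (P:ℝ) := by linarith
      exact_mod_cast h2
    have hP2 : 2 ≤ P := le_trans hp2 (Nat.le_self_pow (by omega) p)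
    have hcb : ((P + d + 1 : ℕ) : ℝ) ≤ (p:ℝ) ^ ((k:ℝ) + eps + (i:ℝ)) + mu := by
      have hrw : (p:ℝ) ^ ((k:ℝ) + eps + (i:ℝ)) = (P:ℝ) * (p:ℝ) ^ eps := by
        rw [show (k:ℝ) + eps + (i:ℝ) = ((k + i : ℕ):ℝ) + eps by push_cast; ring,
          Real.rpow_add (by positivity), Real.rpow_natCast]
        rw [hPdef]
        push_cast
        ring
      rw [hrw]
      have h2 : ((d:ℝ) + 2 - mu) / ((p:ℝ)^eps - 1) < (P:ℝ) :=
        lt_of_lt_of_le (lt_of_le_of_lt (le_max_right _ _) hi) hPi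
      have h3 : (d:ℝ) + 2 - mu ≤ (P:ℝ) * ((p:ℝ)^eps - 1) := by
        rw [div_lt_iff₀ hδ] at h2
        linarith
      push_cast
      nlinarith [h3]
    have hdvd := hf i (P + d + 1) hcb
    have hcoeff := (PowerSeries.X_pow_dvd_iff.mp hdvd) (P + d) (by omega)
    have hone : (1 : ℤ_[p]) + (p : ℤ_[p]) ^ (k + i) = ((1 + p ^ (k + i) : ℕ) : ℤ_[p]) := by
      push_cast; ring
    rw [hone, onePlusXPow_eq E (k + i) (by omega)] at hcoeff
    have hg : ((1 + X) * (1 + (X : PowerSeries E) ^ (p ^ (k + i))) - 1)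
        = X + X ^ P + X ^ (P + 1) := by
      rw [hPdef, pow_succ]
      ring
    rw [hg, map_sub, coeff_psComp_special f P d hP2 hdP] at hcoeff
    linear_combination hcoeff
  have hzero : ∀ d : ℕ, ((d : ℕ) : E) * coeff d f = 0 := by
    intro d
    induction d with
    | zero => simp
    | succ n ih =>
      have h1 := key n
      push_cast at h1 ih ⊢
      linear_combination h1 - ih
  intro j hj
  have hne : ((j : ℕ) : E) ≠ 0 := fun h => hj ((CharP.cast_eq_zero_iff E p j).mp h)
  exact (mul_eq_zero.mp (hzero j)).resolve_left hne
end

section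
/- Let Ẽ^+ be the X-adic completion of ∪_{n≥0} E[[X^{1/p^n}]], with its continuous Z_p^×-action. Every f ∈ Ẽ^+ can be written uniquely as f = Σ_{i∈I} (1+X)^i a_i(f) with a_i(f) ∈ E[[X]], a_i(f) → 0, where I = ∪_m (p^{-m}Z ∩ [0,1)); moreover val_X(f) - 1 < inf_{i∈I} val_X(a_i(f)) ≤ val_X(f). -/
open Filter Topology PowerSeries
set_option linter.unusedSectionVars false
set_option linter.unusedVariables false
set_option maxHeartbeats 1600000

noncomputable def expandP (p : ℕ) (E : Type*) [Field E] (f : PowerSeries E) : PowerSeries E :=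
  PowerSeries.mk fun k => if p ∣ k then PowerSeries.coeff (R := E) (k / p) f else 0

def Iset (p : ℕ) : Type := {q : ℚ // ∃ m j : ℕ, j < p ^ m ∧ q = (j : ℚ) / (p : ℚ) ^ m}

instance (p : ℕ) : DecidableEq (Iset p) := fun a b =>
  decidable_of_iff _ Subtype.ext_iff.symm

noncomputable def onePlusXRat {p : ℕ} {E : Type*} [Field E] {R : Type*} [CommRing R]
    (ι : ℕ → PowerSeries E →+* R) (i : Iset p) : R :=
  ι i.2.choose ((1 + X) ^ i.2.choose_spec.choose)

noncomputable def eI (p : ℕ) (E : Type*) [Field E] (m : ℕ) (f : PowerSeries E) : PowerSeries E :=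
  (expandP p E)^[m] f

section Alg
variable {p : ℕ} [Fact p.Prime] {E : Type*} [Field E]

lemma pp : 1 < p := (Fact.out : p.Prime).one_lt

lemma coeff_expandP (f : PowerSeries E) (k : ℕ) :
    coeff (R := E) k (expandP p E f) = if p ∣ k then coeff (R := E) (k / p) f else 0 := by
  simp [expandP]

lemma expandP_add (f g : PowerSeries E) :
    expandP p E (f + g) = expandP p E f + expandP p E g := by
  ext k; simp only [map_add, coeff_expandP]; split <;> simp

lemma expandP_sub (f g : PowerSeries E) :
    expandP p E (f - g) = expandP p E f - expandP p E g := by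
  ext k; simp only [map_sub, coeff_expandP]; split <;> simp

lemma expandP_one : expandP p E 1 = 1 := by
  have hp0 : 0 < p := lt_trans one_pos pp
  ext k
  rw [coeff_expandP]
  rcases Nat.eq_zero_or_pos k with rfl | hk
  · simp
  · by_cases h : p ∣ k
    · rw [if_pos h, coeff_one, coeff_one, if_neg hk.ne', if_neg]
      exact (Nat.div_pos (Nat.le_of_dvd hk h) hp0).ne'
    · rw [if_neg h, coeff_one, if_neg hk.ne']

lemma expandP_mul (f g : PowerSeries E) :
    expandP p E (f * g) = expandP p E f * expandP p E g := by
  have hp0 : 0 < p := lt_trans one_pos pp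
  ext n
  rw [coeff_expandP, coeff_mul]
  by_cases h : p ∣ n
  · obtain ⟨m, rfl⟩ := h
    rw [if_pos (Dvd.intro m rfl), Nat.mul_div_cancel_left _ hp0, coeff_mul]
    set emb : ℕ × ℕ ↪ ℕ × ℕ :=
      ⟨fun q => (p * q.1, p * q.2), by
        intro a b hab
        simpa [Prod.ext_iff, hp0.ne'] using hab⟩ with hemb
    have hsub : (Finset.HasAntidiagonal.antidiagonal m).map emb ⊆ Finset.HasAntidiagonal.antidiagonal (p * m) := by
      intro q hq
      obtain ⟨r, hr, rfl⟩ := Finset.mem_map.mp hq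
      rw [Finset.HasAntidiagonal.mem_antidiagonal] at hr ⊢
      rw [show emb r = (p * r.1, p * r.2) from rfl]
      rw [← Nat.left_distrib, hr]
    rw [← Finset.sum_subset hsub ?_, Finset.sum_map]
    · apply Finset.sum_congr rfl
      intro q hq
      rw [show emb q = (p * q.1, p * q.2) from rfl]
      simp only [hemb, Function.Embedding.coeFn_mk, coeff_expandP,
        if_pos (Dvd.intro q.1 rfl), if_pos (Dvd.intro q.2 rfl),
        Nat.mul_div_cancel_left _ hp0]
    · intro q hq hq'
      rw [coeff_expandP, coeff_expandP]
      by_cases h1 : p ∣ q.1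
      · by_cases h2 : p ∣ q.2
        · exfalso
          apply hq'
          rw [Finset.mem_map]
          obtain ⟨u, hu⟩ := h1
          obtain ⟨w, hw⟩ := h2
          refine ⟨(u, w), ?_, ?_⟩
          · rw [Finset.HasAntidiagonal.mem_antidiagonal]
            have h3 := Finset.HasAntidiagonal.mem_antidiagonal.mp hq
            rw [hu, hw] at h3
            exact Nat.eq_of_mul_eq_mul_left hp0 (by rw [Nat.left_distrib, h3])
          · have : emb (u, w) = (p * u, p * w) := rfl
            rw [this]
            exact Prod.ext hu.symm hw.symm
        · rw [if_neg h2, mul_zero]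
      · rw [if_neg h1, zero_mul]
  · rw [if_neg h, coeff_mul]
    refine (Finset.sum_eq_zero fun q hq => ?_).symm
    rw [coeff_expandP, coeff_expandP]
    by_cases h1 : p ∣ q.1
    · have h2 : ¬ p ∣ q.2 := fun h2 =>
        h (Finset.HasAntidiagonal.mem_antidiagonal.mp hq ▸ Nat.dvd_add h1 h2)
      rw [if_neg h2, mul_zero]
    · rw [if_neg h1, zero_mul]


lemma eI_zero_eq (f : PowerSeries E) : eI p E 0 f = f := rfl

lemma eI_succ (m : ℕ) (f : PowerSeries E) :
    eI p E (m+1) f = expandP p E (eI p E m f) := Function.iterate_succ_apply' _ _ _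

lemma eI_add_eq (m n : ℕ) (f : PowerSeries E) : eI p E (m + n) f = eI p E n (eI p E m f) := by
  rw [eI, eI, eI, Nat.add_comm, Function.iterate_add_apply]

lemma coeff_eI (m : ℕ) (f : PowerSeries E) (k : ℕ) :
    coeff (R := E) k (eI p E m f) = if p ^ m ∣ k then coeff (R := E) (k / p ^ m) f else 0 := by
  have hp0 : 0 < p := lt_trans one_pos pp
  induction m generalizing k with
  | zero => simp [eI_zero_eq]
  | succ m ih =>
    rw [eI_succ, coeff_expandP]
    by_cases h : p ∣ k
    · rw [if_pos h, ih, Nat.div_div_eq_div_mul, mul_comm p (p ^ m), ← pow_succ]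
      have hiff : p ^ m ∣ k / p ↔ p ^ (m + 1) ∣ k := by
        rw [Nat.dvd_div_iff_mul_dvd h, mul_comm, ← pow_succ]
      by_cases h2 : p ^ (m + 1) ∣ k
      · rw [if_pos (hiff.mpr h2), if_pos h2]
      · rw [if_neg (fun hh => h2 (hiff.mp hh)), if_neg h2]
    · rw [if_neg h, if_neg]
      intro hd
      exact h (dvd_trans (dvd_pow_self p (Nat.succ_ne_zero m)) hd)

lemma eI_add' (m : ℕ) (f g : PowerSeries E) : eI p E m (f + g) = eI p E m f + eI p E m g := by
  induction m with
  | zero => rfl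
  | succ m ih => rw [eI_succ, ih, expandP_add, eI_succ, eI_succ]

lemma eI_sub' (m : ℕ) (f g : PowerSeries E) : eI p E m (f - g) = eI p E m f - eI p E m g := by
  induction m with
  | zero => rfl
  | succ m ih => rw [eI_succ, ih, expandP_sub, eI_succ, eI_succ]

lemma eI_mul' (m : ℕ) (f g : PowerSeries E) : eI p E m (f * g) = eI p E m f * eI p E m g := by
  induction m with
  | zero => rfl
  | succ m ih => rw [eI_succ, ih, expandP_mul, eI_succ, eI_succ]

lemma eI_one' (m : ℕ) : eI p E m (1 : PowerSeries E) = 1 := by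
  induction m with
  | zero => rfl
  | succ m ih => rw [eI_succ, ih, expandP_one]

lemma eI_X (m : ℕ) : eI p E m (X : PowerSeries E) = X ^ (p ^ m) := by
  have hp0 : 0 < p ^ m := pow_pos (lt_trans one_pos pp) m
  ext k
  rw [coeff_eI, coeff_X_pow]
  by_cases h : p ^ m ∣ k
  · obtain ⟨u, rfl⟩ := h
    rw [if_pos (Dvd.intro u rfl), Nat.mul_div_cancel_left _ hp0, coeff_X]
    by_cases hu : u = 1
    · subst hu; simp
    · rw [if_neg hu, if_neg]
      intro hk
      exact hu (Nat.eq_of_mul_eq_mul_left hp0 (by rw [hk, mul_one]))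
  · rw [if_neg h, if_neg]
    rintro rfl
    exact h dvd_rfl

lemma eI_X_pow_mul (m c : ℕ) (f : PowerSeries E) :
    eI p E m (X ^ c * f) = X ^ (c * p ^ m) * eI p E m f := by
  have h1 : eI p E m ((X : PowerSeries E) ^ c) = X ^ (c * p ^ m) := by
    induction c with
    | zero => simpa using eI_one' m
    | succ c ih => rw [pow_succ, eI_mul', ih, eI_X, Nat.succ_mul, pow_add]
  rw [eI_mul', h1]

lemma coeff_onePlusX_pow (j k : ℕ) :
    coeff (R := E) k ((1 + X : PowerSeries E) ^ j) = (j.choose k : E) := by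
  induction j generalizing k with
  | zero =>
    rcases Nat.eq_zero_or_pos k with rfl | hk
    · simp
    · simp [coeff_one, hk.ne', Nat.choose_eq_zero_of_lt hk]
  | succ j ih =>
    rw [pow_succ, mul_add, mul_one]
    rcases Nat.eq_zero_or_pos k with rfl | hk
    · simp [ih]
    · obtain ⟨k, rfl⟩ := Nat.exists_eq_succ_of_ne_zero hk.ne'
      rw [map_add, ih, coeff_succ_mul_X, ih]
      push_cast [Nat.choose_succ_succ']
      ring

variable [CharP E p]

instance : CharP (PowerSeries E) p :=
  charP_of_injective_ringHom (C_injective (R := E)) p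

lemma expandP_onePlusX (j : ℕ) :
    expandP p E ((1 + X) ^ j) = (1 + X) ^ (p * j) := by
  have h1 : expandP p E (1 + X) = 1 + X ^ p := by
    rw [expandP_add, expandP_one]
    congr 1
    ext k
    rw [coeff_expandP, coeff_X_pow]
    by_cases h : k = p
    · subst h; rw [if_pos dvd_rfl, if_pos rfl, Nat.div_self (lt_trans one_pos pp), coeff_X, if_pos rfl]
    · rw [if_neg h]
      by_cases h2 : p ∣ k
      · rw [if_pos h2, coeff_X, if_neg]
        intro hk
        exact h (by obtain ⟨u, rfl⟩ := h2; rw [Nat.mul_div_cancel_left _ (lt_trans one_pos pp)] at hk; rw [hk, mul_one])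
      · rw [if_neg h2]
  have h2 : expandP p E ((1+X)^j) = (expandP p E (1+X))^j := by
    induction j with
    | zero => simpa using expandP_one
    | succ j ih => rw [pow_succ, expandP_mul, ih, pow_succ]
  have h3 : (1 : PowerSeries E) + X ^ p = (1 + X) ^ p := by
    rw [add_pow_char, one_pow]
  rw [h2, h1, h3, ← pow_mul]

lemma eI_onePlusX (m j : ℕ) :
    eI p E m ((1 + X) ^ j) = (1 + X) ^ (j * p ^ m) := by
  induction m with
  | zero => simp [eI_zero_eq]
  | succ m ih =>
    rw [eI_succ, ih, expandP_onePlusX]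
    congr 1
    ring


lemma keyCoeffTerm (m : ℕ) (a : PowerSeries E) {j s : ℕ} (hs : s < p ^ m) (hj : j < p ^ m)
    (q : ℕ) :
    coeff (R := E) (q * p ^ m + s) ((1 + X) ^ j * eI p E m a) = (j.choose s : E) * coeff (R := E) q a := by
  have hp1 : 1 < p := pp (p := p)
  rw [coeff_mul]
  rw [Finset.sum_eq_single (s, q * p ^ m)]
  · simp only [coeff_onePlusX_pow, coeff_eI]
    rw [if_pos (dvd_mul_left (p ^ m) q), Nat.mul_div_cancel q (pow_pos (lt_trans one_pos hp1) m)]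
  · rintro ⟨k, l⟩ hkl hne
    have hkl' : k + l = q * p ^ m + s := Finset.HasAntidiagonal.mem_antidiagonal.mp hkl
    simp only [coeff_onePlusX_pow, coeff_eI]
    by_cases hdvd : p ^ m ∣ l
    · obtain ⟨u, rfl⟩ := hdvd
      by_cases hk : k < p ^ m
      · exfalso
        apply hne
        have h1 : k % p ^ m = s % p ^ m := by
          have h2 : (k + p ^ m * u) % p ^ m = (q * p ^ m + s) % p ^ m := by rw [hkl']
          rwa [Nat.add_mul_mod_self_left, mul_comm q, Nat.mul_add_mod] at h2
        have hks : k = s := by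
          rwa [Nat.mod_eq_of_lt hk, Nat.mod_eq_of_lt hs] at h1
        subst hks
        rw [add_comm (q * p ^ m) k] at hkl'
        simp only [Prod.mk.injEq]
        exact ⟨trivial, Nat.add_left_cancel hkl'⟩
      · rw [Nat.choose_eq_zero_of_lt (lt_of_lt_of_le hj (le_of_not_gt hk)), Nat.cast_zero,
          zero_mul]
    · rw [if_neg hdvd, mul_zero]
  · intro hmem
    exfalso
    exact hmem (Finset.HasAntidiagonal.mem_antidiagonal.mpr (by omega))

lemma keyCoeff (m : ℕ) (a : ℕ → PowerSeries E) {s : ℕ} (hs : s < p ^ m) (q : ℕ) :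
    coeff (R := E) (q * p ^ m + s) (∑ j ∈ Finset.range (p ^ m), (1 + X) ^ j * eI p E m (a j)) =
      ∑ j ∈ Finset.Ico s (p ^ m), (j.choose s : E) * coeff (R := E) q (a j) := by
  rw [map_sum]
  rw [← Finset.sum_subset (fun j hj => Finset.mem_range.mpr (Finset.mem_Ico.mp hj).2)]
  · exact Finset.sum_congr rfl fun j hj =>
      keyCoeffTerm m (a j) hs (Finset.mem_Ico.mp hj).2 q
  · intro j hjr hj
    rw [keyCoeffTerm m (a j) hs (Finset.mem_range.mp hjr) q,
      Nat.choose_eq_zero_of_lt (by simp only [Finset.mem_Ico, Finset.mem_range] at *; omega),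
      Nat.cast_zero, zero_mul]

noncomputable def Dcoef (p : ℕ) (E : Type*) [Field E] (m : ℕ) (f : PowerSeries E)
    (s q : ℕ) : E :=
  coeff (R := E) (q * p ^ m + s) f -
    ∑ j ∈ (Finset.Ioo s (p ^ m)).attach, ((j : ℕ).choose s : E) * Dcoef p E m f j q
termination_by p ^ m - s
decreasing_by
  have := Finset.mem_Ioo.mp j.2
  omega

lemma Ico_succ_eq_Ioo (s t : ℕ) : Finset.Ico (s + 1) t = Finset.Ioo s t := by
  ext j; simp only [Finset.mem_Ico, Finset.mem_Ioo]; omega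

lemma keyD (m : ℕ) (f : PowerSeries E) {s : ℕ} (hs : s < p ^ m) (q : ℕ) :
    ∑ j ∈ Finset.Ico s (p ^ m), (j.choose s : E) * Dcoef p E m f j q =
      coeff (R := E) (q * p ^ m + s) f := by
  rw [Finset.sum_eq_sum_Ico_succ_bot hs, Nat.choose_self, Nat.cast_one, one_mul,
    Ico_succ_eq_Ioo, Dcoef, Finset.sum_attach (Finset.Ioo s (p ^ m))
      (fun j => ((j : ℕ).choose s : E) * Dcoef p E m f j q)]
  ring

noncomputable def Dfun (p : ℕ) (E : Type*) [Field E] (m : ℕ) (f : PowerSeries E)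
    (j : ℕ) : PowerSeries E :=
  PowerSeries.mk fun q => Dcoef p E m f j q

lemma lemmaA_exists (m : ℕ) (f : PowerSeries E) :
    f = ∑ j ∈ Finset.range (p ^ m), (1 + X) ^ j * eI p E m (Dfun p E m f j) := by
  have hp0 : 0 < p ^ m := pow_pos (lt_trans one_pos (pp (p := p))) m
  ext n
  have hn : n = (n / p ^ m) * p ^ m + n % p ^ m := by
    rw [mul_comm]; exact (Nat.div_add_mod n (p ^ m)).symm
  rw [hn, keyCoeff m _ (Nat.mod_lt n hp0)]
  rw [← keyD m f (Nat.mod_lt n hp0) (n / p ^ m)]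
  exact Finset.sum_congr rfl fun j _ => by rw [Dfun, coeff_mk]

/-- If the combination vanishes below `K * p^m` then each coefficient power series
vanishes below `K`. -/
lemma lemmaA_coeff_zero (m K : ℕ) (a : ℕ → PowerSeries E)
    (h : ∀ n < K * p ^ m,
      coeff (R := E) n (∑ j ∈ Finset.range (p ^ m), (1 + X) ^ j * eI p E m (a j)) = 0) :
    ∀ j < p ^ m, ∀ q < K, coeff (R := E) q (a j) = 0 := by
  have hp0 : 0 < p ^ m := pow_pos (lt_trans one_pos (pp (p := p))) m
  suffices H : ∀ t s q, p ^ m ≤ s + t → s < p ^ m → q < K → coeff (R := E) q (a s) = 0 by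
    intro j hj q hq
    exact H (p ^ m) j q (by omega) hj hq
  intro t
  induction t with
  | zero => intro s q h1 h2 _; omega
  | succ t ih =>
    intro s q h1 h2 hq
    have hco : ∑ j ∈ Finset.Ico s (p ^ m), (j.choose s : E) * coeff (R := E) q (a j) = 0 := by
      rw [← keyCoeff m a h2 q]
      apply h
      calc q * p ^ m + s < q * p ^ m + p ^ m := by omega
      _ = (q + 1) * p ^ m := by ring
      _ ≤ K * p ^ m := Nat.mul_le_mul_right _ (by omega)
    rw [Finset.sum_eq_sum_Ico_succ_bot h2, Nat.choose_self, Nat.cast_one, one_mul] at hco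
    have hrest : ∑ j ∈ Finset.Ico (s + 1) (p ^ m), (j.choose s : E) * coeff (R := E) q (a j) = 0 := by
      apply Finset.sum_eq_zero
      intro j hj
      have hj' := Finset.mem_Ico.mp hj
      rw [ih j q (by omega) hj'.2 hq, mul_zero]
    rw [hrest, add_zero] at hco
    exact hco

lemma lemmaA_dvd_iff (m K : ℕ) (a : ℕ → PowerSeries E) :
    (∀ j < p ^ m, (X : PowerSeries E) ^ K ∣ a j) ↔
      (X : PowerSeries E) ^ (K * p ^ m) ∣
        ∑ j ∈ Finset.range (p ^ m), (1 + X) ^ j * eI p E m (a j) := by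
  have hp0 : 0 < p ^ m := pow_pos (lt_trans one_pos (pp (p := p))) m
  constructor
  · intro h
    rw [X_pow_dvd_iff]
    intro n hn
    have hn' : n = (n / p ^ m) * p ^ m + n % p ^ m := by
      rw [mul_comm]; exact (Nat.div_add_mod n (p ^ m)).symm
    rw [hn', keyCoeff m a (Nat.mod_lt n hp0)]
    apply Finset.sum_eq_zero
    intro j hj
    have hjm := (Finset.mem_Ico.mp hj).2
    rw [X_pow_dvd_iff.mp (h j hjm) (n / p ^ m) (Nat.div_lt_of_lt_mul (by rwa [mul_comm])),
      mul_zero]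
  · intro h j hj
    rw [X_pow_dvd_iff]
    intro q hq
    exact lemmaA_coeff_zero m K a (X_pow_dvd_iff.mp h) j hj q hq


end Alg

section ISet
variable {p : ℕ} [Fact p.Prime]

lemma hp1 : 1 < p := (Fact.out : p.Prime).one_lt
lemma hpQ : ((p : ℚ)) ≠ 0 := by
  have h := hp1 (p := p)
  have : (1 : ℚ) < (p : ℚ) := by exact_mod_cast h
  linarith

lemma hpQpow (M : ℕ) : ((p : ℚ)) ^ M ≠ 0 := pow_ne_zero M (hpQ (p := p))

def isLev (M : ℕ) (i : Iset p) : Prop := ∃ j : ℕ, j < p ^ M ∧ i.1 = (j : ℚ) / (p : ℚ) ^ M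

noncomputable def idx (M : ℕ) (i : Iset p) : ℕ := (i.1 * (p : ℚ) ^ M).num.toNat

def mkI (M j : ℕ) (hj : j < p ^ M) : Iset p := ⟨(j : ℚ) / (p : ℚ) ^ M, M, j, hj, rfl⟩

noncomputable def lev (i : Iset p) : ℕ := i.2.choose

noncomputable def jnum (i : Iset p) : ℕ := i.2.choose_spec.choose

lemma jnum_lt (i : Iset p) : jnum i < p ^ lev i := i.2.choose_spec.choose_spec.1

lemma val_eq_jnum (i : Iset p) : i.1 = (jnum i : ℚ) / (p : ℚ) ^ lev i :=
  i.2.choose_spec.choose_spec.2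

lemma isLev_lev (i : Iset p) : isLev (lev i) i := ⟨jnum i, jnum_lt i, val_eq_jnum i⟩

lemma isLev_mono {M M' : ℕ} {i : Iset p} (h : isLev M i) (hMM : M ≤ M') : isLev M' i := by
  obtain ⟨j, hj, he⟩ := h
  refine ⟨j * p ^ (M' - M), ?_, ?_⟩
  · calc j * p ^ (M' - M) < p ^ M * p ^ (M' - M) :=
        (Nat.mul_lt_mul_right (pow_pos (lt_trans one_pos hp1) _)).mpr hj
      _ = p ^ M' := by rw [← pow_add]; congr 1; omega
  · rw [he]
    have hMe : M' - M + M = M' := by omega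
    push_cast
    rw [div_eq_div_iff (hpQpow (p := p) M) (hpQpow (p := p) M'), mul_assoc, ← pow_add, hMe]

lemma idx_spec {M : ℕ} {i : Iset p} (h : isLev M i) :
    (idx M i : ℚ) = i.1 * (p : ℚ) ^ M ∧ idx M i < p ^ M := by
  obtain ⟨j, hj, he⟩ := h
  have hval : i.1 * (p : ℚ) ^ M = (j : ℚ) := by
    rw [he, div_mul_cancel₀ _ (hpQpow (p := p) M)]
  have hidx : idx M i = j := by
    rw [idx, hval, Rat.num_natCast]
    simp
  rw [hidx, hval]
  exact ⟨rfl, hj⟩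

lemma idx_inj {M : ℕ} {i i' : Iset p} (h : isLev M i) (h' : isLev M i')
    (he : idx M i = idx M i') : i = i' := by
  have h1 := (idx_spec h).1
  have h2 := (idx_spec h').1
  apply Subtype.ext
  have e1 : i.1 = (idx M i : ℚ) / (p : ℚ) ^ M := by
    rw [h1, mul_div_cancel_right₀ _ (hpQpow (p := p) M)]
  have e2 : i'.1 = (idx M i' : ℚ) / (p : ℚ) ^ M := by
    rw [h2, mul_div_cancel_right₀ _ (hpQpow (p := p) M)]
  rw [e1, e2, he]

lemma isLev_mkI (M j : ℕ) (hj : j < p ^ M) : isLev M (mkI M j hj) := ⟨j, hj, rfl⟩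

lemma idx_mkI (M j : ℕ) (hj : j < p ^ M) : idx M (mkI M j hj) = j := by
  have := (idx_spec (isLev_mkI M j hj)).1
  have h2 : ((mkI (p := p) M j hj).1 : ℚ) * (p:ℚ)^M = (j : ℚ) := by
    show ((j : ℚ) / (p : ℚ) ^ M) * (p:ℚ)^M = (j : ℚ)
    rw [div_mul_cancel₀ _ (hpQpow (p := p) M)]
  rw [h2] at this
  exact_mod_cast this

lemma mkI_idx {M : ℕ} {i : Iset p} (h : isLev M i) (hlt : idx M i < p ^ M) :
    mkI M (idx M i) hlt = i := by
  apply idx_inj (isLev_mkI _ _ _) h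
  rw [idx_mkI]

noncomputable def IFin (M : ℕ) : Finset (Iset p) :=
  (Finset.range (p ^ M)).attach.image fun j => mkI M j.1 (Finset.mem_range.mp j.2)

lemma mem_IFin {M : ℕ} {i : Iset p} : i ∈ IFin (p := p) M ↔ isLev M i := by
  constructor
  · intro h
    obtain ⟨j, _, rfl⟩ := Finset.mem_image.mp h
    exact isLev_mkI _ _ _
  · intro h
    rw [IFin, Finset.mem_image]
    refine ⟨⟨idx M i, Finset.mem_range.mpr (idx_spec h).2⟩, Finset.mem_attach _ _, ?_⟩
    exact mkI_idx h (idx_spec h).2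

end ISet

section ISet2
variable {p : ℕ} [Fact p.Prime]

lemma idx_levmono {M M' : ℕ} {i : Iset p} (h : isLev M i) (hMM : M ≤ M') :
    idx M' i = idx M i * p ^ (M' - M) := by
  have h1 := (idx_spec (isLev_mono h hMM)).1
  have h2 := (idx_spec h).1
  have : (idx M' i : ℚ) = ((idx M i * p ^ (M' - M) : ℕ) : ℚ) := by
    push_cast
    rw [h1, h2, mul_assoc, ← pow_add]
    congr 2
    omega
  exact_mod_cast this

lemma isLev_of_dvd {M M' : ℕ} {i : Iset p} (h : isLev M' i) (hMM : M ≤ M')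
    (hdvd : p ^ (M' - M) ∣ idx M' i) : isLev M i := by
  obtain ⟨u, hu⟩ := hdvd
  have h1 := (idx_spec h).1
  have h2 := (idx_spec h).2
  have hM2 : M' - M + M = M' := by omega
  refine ⟨u, ?_, ?_⟩
  · have hlt : p ^ (M' - M) * u < p ^ (M' - M) * p ^ M := by
      rw [← hu, ← pow_add, hM2]
      exact h2
    exact Nat.lt_of_mul_lt_mul_left hlt
  · have hq : ((idx M' i : ℚ)) = (p:ℚ) ^ (M' - M) * (u : ℚ) := by
      rw [hu]; push_cast; ring
    have h3 : i.1 * ((p:ℚ) ^ (M' - M) * (p:ℚ) ^ M) = (p:ℚ) ^ (M' - M) * (u : ℚ) := by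
      rw [← pow_add, hM2, ← h1, hq]
    have h5 : (p:ℚ) ^ (M' - M) * (i.1 * (p:ℚ) ^ M) = (p:ℚ) ^ (M' - M) * (u : ℚ) := by
      rw [← h3]; ring
    rw [eq_div_iff (hpQpow (p := p) M)]
    exact mul_left_cancel₀ (hpQpow (p := p) (M' - M)) h5

def zeroI : Iset p := ⟨0, 0, 0, by simp, by simp⟩

instance : Nonempty (Iset p) := ⟨zeroI⟩

end ISet2

section Model
variable {p : ℕ} [Fact p.Prime] {E : Type*} [Field E] [CharP E p]
  {R : Type*} [CommRing R] (v : R → EReal) (ι : ℕ → PowerSeries E →+* R)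

lemma iota_eI (hcompat : ∀ (n : ℕ) (f : PowerSeries E), ι n f = ι (n + 1) (expandP p E f))
    (m d : ℕ) (f : PowerSeries E) : ι m f = ι (m + d) (eI p E d f) := by
  induction d with
  | zero => rw [eI_zero_eq]; rfl
  | succ d ih => rw [ih, hcompat (m + d), eI_succ]; rfl

lemma iotaPow (hcompat : ∀ (n : ℕ) (f : PowerSeries E), ι n f = ι (n + 1) (expandP p E f))
    {m M : ℕ} (hmM : m ≤ M) (j : ℕ) :
    ι m ((1 + X) ^ j) = ι M ((1 + X) ^ (j * p ^ (M - m))) := by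
  obtain ⟨d, rfl⟩ := Nat.exists_eq_add_of_le hmM
  rw [Nat.add_sub_cancel_left, iota_eI ι hcompat m d, eI_onePlusX]

lemma iotaRatio (hcompat : ∀ (n : ℕ) (f : PowerSeries E), ι n f = ι (n + 1) (expandP p E f))
    {m m' j j' : ℕ} (h : (j : ℚ) / (p : ℚ) ^ m = (j' : ℚ) / (p : ℚ) ^ m') :
    ι m ((1 + X) ^ j) = ι m' ((1 + X) ^ j') := by
  have key : ∀ {a a' b b' : ℕ}, a ≤ a' → (b : ℚ) / (p : ℚ) ^ a = (b' : ℚ) / (p : ℚ) ^ a' →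
      ι a ((1 + X) ^ b) = ι a' ((1 + X) ^ b') := by
    intro a a' b b' haa hr
    have hb' : b' = b * p ^ (a' - a) := by
      have h1 : (b : ℚ) * (p : ℚ) ^ a' = (b' : ℚ) * (p : ℚ) ^ a :=
        (div_eq_div_iff (hpQpow (p := p) a) (hpQpow (p := p) a')).mp hr
      have h2 : (p : ℚ) ^ a' = (p : ℚ) ^ (a' - a) * (p : ℚ) ^ a := by
        rw [← pow_add]; congr 1; omega
      rw [h2, ← mul_assoc] at h1
      have h3 : (b : ℚ) * (p : ℚ) ^ (a' - a) = (b' : ℚ) :=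
        mul_right_cancel₀ (hpQpow (p := p) a) h1
      exact_mod_cast h3.symm
    rw [hb']
    exact iotaPow ι hcompat haa b
  rcases le_total m m' with hmm | hmm
  · exact key hmm h
  · exact (key hmm h.symm).symm

lemma onePlusXRat_eq (hcompat : ∀ (n : ℕ) (f : PowerSeries E), ι n f = ι (n + 1) (expandP p E f))
    {M : ℕ} {i : Iset p} (h : isLev M i) :
    onePlusXRat ι i = ι M ((1 + X) ^ (idx M i)) := by
  have h0 : onePlusXRat ι i = ι (lev i) ((1 + X) ^ (jnum i)) := rfl
  rw [h0]
  apply iotaRatio ι hcompat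
  rw [← val_eq_jnum]
  rw [eq_div_iff (hpQpow (p := p) M)]
  exact ((idx_spec h).1).symm

lemma hpRpow (M : ℕ) : ((p : ℝ)) ^ M ≠ 0 := by
  have h := hp1 (p := p)
  have : (0:ℝ) < (p:ℝ) := by exact_mod_cast lt_trans one_pos h
  positivity

lemma v_iota_nonneg
    (hv_iota : ∀ (n : ℕ) (f : PowerSeries E) (c : ℕ),
      ((X : PowerSeries E) ^ c ∣ f) ↔ (((c : ℝ) / (p : ℝ) ^ n : ℝ) : EReal) ≤ v (ι n f))
    (n : ℕ) (f : PowerSeries E) : (0 : EReal) ≤ v (ι n f) := by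
  have h := (hv_iota n f 0).mp (by rw [pow_zero]; exact one_dvd f)
  simpa using h

lemma v_le_iff_nat
    (hv_iota : ∀ (n : ℕ) (f : PowerSeries E) (c : ℕ),
      ((X : PowerSeries E) ^ c ∣ f) ↔ (((c : ℝ) / (p : ℝ) ^ n : ℝ) : EReal) ≤ v (ι n f))
    (k M : ℕ) (f : PowerSeries E) :
    ((X : PowerSeries E) ^ (k * p ^ M) ∣ f) ↔ ((k : ℝ) : EReal) ≤ v (ι M f) := by
  have h := hv_iota M f (k * p ^ M)
  have he : ((k * p ^ M : ℕ) : ℝ) / (p : ℝ) ^ M = (k : ℝ) := by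
    push_cast
    rw [mul_div_assoc, div_self (hpRpow (p := p) M), mul_one]
  rwa [he] at h

lemma v_one (hv_mul : ∀ x y : R, v (x * y) = v x + v y)
    (hv_iota : ∀ (n : ℕ) (f : PowerSeries E) (c : ℕ),
      ((X : PowerSeries E) ^ c ∣ f) ↔ (((c : ℝ) / (p : ℝ) ^ n : ℝ) : EReal) ≤ v (ι n f)) :
    v (1 : R) = 0 := by
  have h0 : (0 : EReal) ≤ v 1 := by
    have := v_iota_nonneg v ι hv_iota 0 1
    rwa [map_one] at this
  have h1 : ¬ ((1 : ℝ) : EReal) ≤ v 1 := by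
    have hnd : ¬ (X : PowerSeries E) ^ (1 * p ^ 0) ∣ 1 := by
      rw [pow_zero, mul_one, pow_one]
      intro hd
      have hd1 : (X : PowerSeries E) ^ 1 ∣ 1 := by rwa [pow_one]
      have := X_pow_dvd_iff.mp hd1 0 one_pos
      simp at this
    intro hle
    apply hnd
    rw [v_le_iff_nat v ι hv_iota 1 0 1]
    rwa [map_one, Nat.cast_one]
  have h2 : v 1 = v 1 + v 1 := by rw [← hv_mul 1 1, one_mul]
  have hne_top : v 1 ≠ ⊤ := fun h => h1 (h ▸ le_top)
  have hne_bot : v 1 ≠ ⊥ := fun h => by rw [h] at h0; exact absurd h0 (by simp)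
  set r := (v 1).toReal with hr
  have hvr : v 1 = (r : EReal) := (EReal.coe_toReal hne_top hne_bot).symm
  rw [hvr, ← EReal.coe_add] at h2
  have h3 : r = r + r := EReal.coe_eq_coe_iff.mp h2
  have h4 : r = 0 := by linarith
  rw [hvr, h4, EReal.coe_zero]

lemma v_neg_one (hv_mul : ∀ x y : R, v (x * y) = v x + v y)
    (hv_iota : ∀ (n : ℕ) (f : PowerSeries E) (c : ℕ),
      ((X : PowerSeries E) ^ c ∣ f) ↔ (((c : ℝ) / (p : ℝ) ^ n : ℝ) : EReal) ≤ v (ι n f)) :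
    v (-1 : R) = 0 := by
  have h : v (-1 : R) + v (-1 : R) = 0 := by
    rw [← hv_mul, neg_mul_neg, one_mul, v_one v ι hv_mul hv_iota]
  have hne_top : v (-1 : R) ≠ ⊤ := fun hh => by
    rw [hh] at h; simp at h
  have hne_bot : v (-1 : R) ≠ ⊥ := fun hh => by
    rw [hh] at h; simp at h
  set r := (v (-1 : R)).toReal with hr
  have hvr : v (-1 : R) = (r : EReal) := (EReal.coe_toReal hne_top hne_bot).symm
  rw [hvr, ← EReal.coe_add] at h
  have h2 : r + r = 0 := EReal.coe_eq_coe_iff.mp (by rw [← EReal.coe_zero] at h; exact h)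
  have h3 : r = 0 := by linarith
  rw [hvr, h3, EReal.coe_zero]

lemma v_neg (hv_mul : ∀ x y : R, v (x * y) = v x + v y)
    (hv_iota : ∀ (n : ℕ) (f : PowerSeries E) (c : ℕ),
      ((X : PowerSeries E) ^ c ∣ f) ↔ (((c : ℝ) / (p : ℝ) ^ n : ℝ) : EReal) ≤ v (ι n f))
    (y : R) : v (-y) = v y := by
  have : (-y : R) = -1 * y := by ring
  rw [this, hv_mul, v_neg_one v ι hv_mul hv_iota, zero_add]

lemma v_add_ge (hv_add : ∀ x y : R, min (v x) (v y) ≤ v (x + y))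
    {c : EReal} {a b : R} (ha : c ≤ v a) (hb : c ≤ v b) : c ≤ v (a + b) :=
  le_trans (le_min ha hb) (hv_add a b)

lemma v_sum_ge (hv_top : ∀ x : R, v x = ⊤ ↔ x = 0)
    (hv_add : ∀ x y : R, min (v x) (v y) ≤ v (x + y))
    {γ : Type*} {c : EReal} (t : Finset γ) (f : γ → R)
    (h : ∀ i ∈ t, c ≤ v (f i)) : c ≤ v (∑ i ∈ t, f i) := by
  induction t using Finset.cons_induction with
  | empty => rw [Finset.sum_empty, (hv_top 0).mpr rfl]; exact le_top
  | cons i t hi ih =>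
    rw [Finset.sum_cons]
    exact v_add_ge v hv_add (h i (Finset.mem_cons_self i t))
      (ih fun j hj => h j (Finset.mem_cons_of_mem hj))

lemma v_onePlusXRat (hcompat : ∀ (n : ℕ) (f : PowerSeries E), ι n f = ι (n + 1) (expandP p E f))
    (hv_iota : ∀ (n : ℕ) (f : PowerSeries E) (c : ℕ),
      ((X : PowerSeries E) ^ c ∣ f) ↔ (((c : ℝ) / (p : ℝ) ^ n : ℝ) : EReal) ≤ v (ι n f))
    (i : Iset p) : v (onePlusXRat ι i) = 0 := by
  have h0 : onePlusXRat ι i = ι (lev i) ((1 + X) ^ (jnum i)) := rfl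
  have hge : (0 : EReal) ≤ v (onePlusXRat ι i) := by
    rw [h0]; exact v_iota_nonneg v ι hv_iota _ _
  rcases eq_or_lt_of_le hge with he | hlt
  · exact he.symm
  exfalso
  obtain ⟨r, hr0, hrv⟩ := EReal.exists_between_coe_real hlt
  have hr0' : (0 : ℝ) < r := by exact_mod_cast hr0
  have hpR : (1 : ℝ) < (p : ℝ) := by exact_mod_cast hp1 (p := p)
  obtain ⟨N, hN⟩ := pow_unbounded_of_one_lt (1 / r) hpR
  set M := lev i + N with hM
  have heq : onePlusXRat ι i = ι M ((1 + X) ^ (jnum i * p ^ N)) := by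
    rw [h0, iotaPow ι hcompat (Nat.le_add_right _ N), Nat.add_sub_cancel_left]
  have hnd : ¬ (X : PowerSeries E) ^ 1 ∣ (1 + X) ^ (jnum i * p ^ N) := by
    intro hd
    have := X_pow_dvd_iff.mp hd 0 one_pos
    rw [coeff_onePlusX_pow] at this
    simp at this
  have hle : (((1 : ℝ) / (p : ℝ) ^ M : ℝ) : EReal) ≤ v (onePlusXRat ι i) := by
    refine le_trans ?_ (le_of_lt hrv)
    rw [EReal.coe_le_coe_iff]
    rw [div_le_iff₀ (by positivity)]
    calc (1 : ℝ) = (1 / r) * r := by field_simp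
      _ ≤ (p : ℝ) ^ N * r := by
          apply mul_le_mul_of_nonneg_right (le_of_lt hN) (le_of_lt hr0')
      _ ≤ (p : ℝ) ^ M * r := by
          apply mul_le_mul_of_nonneg_right _ (le_of_lt hr0')
          apply pow_le_pow_right₀ (le_of_lt hpR)
          omega
      _ = r * (p : ℝ) ^ M := by ring
  apply hnd
  rw [hv_iota M _ 1]
  rw [Nat.cast_one, ← heq]
  exact hle

noncomputable def Afun {p : ℕ} [Fact p.Prime] {E : Type*} [Field E] (t : Finset (Iset p))
    (a : Iset p → PowerSeries E) (M j : ℕ) : PowerSeries E :=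
  ∑ i ∈ t.filter (fun i => idx M i = j), a i

lemma sum_repr (hcompat : ∀ (n : ℕ) (f : PowerSeries E), ι n f = ι (n + 1) (expandP p E f))
    (t : Finset (Iset p)) (a : Iset p → PowerSeries E) (M : ℕ)
    (hM : ∀ i ∈ t, isLev M i) :
    ∑ i ∈ t, onePlusXRat ι i * ι 0 (a i) =
      ι M (∑ j ∈ Finset.range (p ^ M), (1 + X) ^ j * eI p E M (Afun t a M j)) := by
  have hmap : ∀ i ∈ t, idx M i ∈ Finset.range (p ^ M) := fun i hi =>
    Finset.mem_range.mpr (idx_spec (hM i hi)).2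
  calc ∑ i ∈ t, onePlusXRat ι i * ι 0 (a i)
      = ∑ i ∈ t, ι M ((1 + X) ^ (idx M i)) * ι 0 (a i) :=
        Finset.sum_congr rfl fun i hi => by rw [onePlusXRat_eq ι hcompat (hM i hi)]
    _ = ∑ j ∈ Finset.range (p ^ M), ∑ i ∈ t.filter (fun i => idx M i = j),
          ι M ((1 + X) ^ (idx M i)) * ι 0 (a i) :=
        (Finset.sum_fiberwise_of_maps_to hmap _).symm
    _ = ∑ j ∈ Finset.range (p ^ M), ι M ((1 + X) ^ j * eI p E M (Afun t a M j)) := by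
        apply Finset.sum_congr rfl
        intro j hj
        have h00 : ∀ f : PowerSeries E, ι 0 f = ι M (eI p E M f) := fun f => by
          have h01 := iota_eI ι hcompat 0 M f
          rwa [Nat.zero_add] at h01
        rw [map_mul, ← h00 (Afun t a M j), Afun, map_sum, Finset.mul_sum]
        apply Finset.sum_congr rfl
        intro i hi
        rw [(Finset.mem_filter.mp hi).2]
    _ = ι M (∑ j ∈ Finset.range (p ^ M), (1 + X) ^ j * eI p E M (Afun t a M j)) :=
        (map_sum _ _ _).symm

end Model

section Model2
variable {p : ℕ} [Fact p.Prime] {E : Type*} [Field E] [CharP E p]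
  {R : Type*} [CommRing R] (v : R → EReal) (ι : ℕ → PowerSeries E →+* R)

lemma Afun_eq (t : Finset (Iset p)) (a : Iset p → PowerSeries E) (M j : ℕ)
    (hj : j < p ^ M) (hM : ∀ i ∈ t, isLev M i) :
    Afun t a M j = if mkI M j hj ∈ t then a (mkI M j hj) else 0 := by
  have hsub : t.filter (fun i => idx M i = j) ⊆ {mkI M j hj} := by
    intro i hi
    obtain ⟨hit, hidx⟩ := Finset.mem_filter.mp hi
    rw [Finset.mem_singleton]
    apply idx_inj (hM i hit) (isLev_mkI M j hj)
    rw [hidx, idx_mkI]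
  by_cases hmem : mkI M j hj ∈ t
  · rw [if_pos hmem, Afun]
    have hfe : t.filter (fun i => idx M i = j) = {mkI M j hj} := by
      apply Finset.Subset.antisymm hsub
      rw [Finset.singleton_subset_iff, Finset.mem_filter]
      exact ⟨hmem, idx_mkI M j hj⟩
    rw [hfe, Finset.sum_singleton]
  · rw [if_neg hmem, Afun]
    have hfe : t.filter (fun i => idx M i = j) = ∅ := by
      rw [Finset.eq_empty_iff_forall_notMem]
      intro i hi
      have := Finset.mem_singleton.mp (hsub hi)
      subst this
      exact hmem (Finset.mem_filter.mp hi).1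
    rw [hfe, Finset.sum_empty]

lemma extract
    (hcompat : ∀ (n : ℕ) (f : PowerSeries E), ι n f = ι (n + 1) (expandP p E f))
    (hv_iota : ∀ (n : ℕ) (f : PowerSeries E) (c : ℕ),
      ((X : PowerSeries E) ^ c ∣ f) ↔ (((c : ℝ) / (p : ℝ) ^ n : ℝ) : EReal) ≤ v (ι n f))
    (t : Finset (Iset p)) (b : Iset p → PowerSeries E) (k : ℕ) (i₀ : Iset p) (hi₀ : i₀ ∈ t)
    (hv : ((k : ℝ) : EReal) ≤ v (∑ i ∈ t, onePlusXRat ι i * ι 0 (b i))) :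
    (X : PowerSeries E) ^ k ∣ b i₀ := by
  set M := t.sup lev with hMdef
  have hM : ∀ i ∈ t, isLev M i := fun i hi =>
    isLev_mono (isLev_lev i) (Finset.le_sup hi)
  rw [sum_repr ι hcompat t b M hM] at hv
  have hdd := (v_le_iff_nat v ι hv_iota k M _).mpr hv
  have hco := (lemmaA_dvd_iff M k _).mpr hdd
  have hj : idx M i₀ < p ^ M := (idx_spec (hM i₀ hi₀)).2
  have h2 := hco (idx M i₀) hj
  rwa [Afun_eq t b M (idx M i₀) hj hM, mkI_idx (hM i₀ hi₀) hj, if_pos hi₀] at h2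

lemma eq_zero_of_forall_dvd {h : PowerSeries E} (hd : ∀ k, (X : PowerSeries E) ^ k ∣ h) :
    h = 0 := by
  ext n
  rw [map_zero]
  exact X_pow_dvd_iff.mp (hd (n + 1)) n (Nat.lt_succ_self n)

lemma eq_top_of_forall_le {z : EReal} (h : ∀ r : ℝ, (r : EReal) ≤ z) : z = ⊤ := by
  by_contra hne
  obtain ⟨r, hr1, _⟩ := EReal.exists_between_coe_real (lt_top_iff_ne_top.mpr hne)
  exact absurd (h r) (not_le.mpr hr1)

lemma eI_zero (m : ℕ) : eI p E m (0 : PowerSeries E) = 0 := by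
  have := eI_sub' (p := p) (E := E) m 0 0
  simpa using this

lemma eI_sum {γ : Type*} (m : ℕ) (t : Finset γ) (f : γ → PowerSeries E) :
    eI p E m (∑ i ∈ t, f i) = ∑ i ∈ t, eI p E m (f i) := by
  induction t using Finset.cons_induction with
  | empty => simp [eI_zero]
  | cons i t hi ih => rw [Finset.sum_cons, eI_add', ih, Finset.sum_cons]

/-- Reindexing a sum over `range M0` scaled by `d` as a sum over `range (M0 * d)`. -/
lemma reindex_sum {γ : Type*} [AddCommMonoid γ] (G : ℕ → γ) (d M0 : ℕ) (hd : 0 < d) :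
    ∑ j' ∈ Finset.range M0, G (j' * d) =
      ∑ j ∈ Finset.range (M0 * d), (if d ∣ j then G j else 0) := by
  set emb : ℕ ↪ ℕ := ⟨fun j' => j' * d, fun a b hab => by
    simpa [Nat.mul_left_cancel_iff, hd.ne'] using (Nat.eq_of_mul_eq_mul_right hd hab)⟩ with hemb
  have hsub : (Finset.range M0).map emb ⊆ Finset.range (M0 * d) := by
    intro j hj
    obtain ⟨j', hj', rfl⟩ := Finset.mem_map.mp hj
    rw [Finset.mem_range] at hj' ⊢
    exact Nat.mul_lt_mul_right hd |>.mpr hj'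
  rw [← Finset.sum_subset hsub ?_, Finset.sum_map]
  · apply Finset.sum_congr rfl
    intro j' hj'
    have : emb j' = j' * d := rfl
    rw [this, if_pos (dvd_mul_left d j')]
  · intro j hjr hj'
    rw [if_neg]
    intro hdvd
    apply hj'
    obtain ⟨u, rfl⟩ := hdvd
    rw [Finset.mem_map]
    refine ⟨u, ?_, Nat.mul_comm u d⟩
    rw [Finset.mem_range] at hjr ⊢
    rw [mul_comm] at hjr
    exact lt_of_mul_lt_mul_right hjr (Nat.zero_le d)

end Model2

section Alg2
variable {p : ℕ} [Fact p.Prime] {E : Type*} [Field E] [CharP E p]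

lemma eI_decomp (m Δ : ℕ) (g : PowerSeries E) :
    eI p E Δ g = ∑ j ∈ Finset.range (p ^ (m + Δ)), (1 + X) ^ j *
      eI p E (m + Δ) (if p ^ Δ ∣ j then Dfun p E m g (j / p ^ Δ) else 0) := by
  have hpΔ : 0 < p ^ Δ := pow_pos (lt_trans one_pos (pp (p := p))) Δ
  conv_lhs => rw [lemmaA_exists (p := p) m g]
  rw [eI_sum]
  have hterm : ∀ j' : ℕ, eI p E Δ ((1 + X) ^ j' * eI p E m (Dfun p E m g j')) =
      (1 + X) ^ (j' * p ^ Δ) * eI p E (m + Δ) (Dfun p E m g j') := by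
    intro j'
    rw [eI_mul', eI_onePlusX, eI_add_eq m Δ]
  rw [Finset.sum_congr rfl fun j' _ => hterm j']
  have hre := reindex_sum
    (fun j => (1 + X : PowerSeries E) ^ j * eI p E (m + Δ) (Dfun p E m g (j / p ^ Δ)))
    (p ^ Δ) (p ^ m) hpΔ
  have hdiv : ∀ j' : ℕ, j' * p ^ Δ / p ^ Δ = j' := fun j' => Nat.mul_div_cancel j' hpΔ
  have hre' : ∑ j' ∈ Finset.range (p ^ m), (1 + X : PowerSeries E) ^ (j' * p ^ Δ) *
        eI p E (m + Δ) (Dfun p E m g j') =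
      ∑ j ∈ Finset.range (p ^ m * p ^ Δ), if p ^ Δ ∣ j then
        (1 + X : PowerSeries E) ^ j * eI p E (m + Δ) (Dfun p E m g (j / p ^ Δ)) else 0 := by
    rw [← hre]
    apply Finset.sum_congr rfl
    intro j' _
    simp only [hdiv j']
  rw [hre', ← pow_add]
  apply Finset.sum_congr rfl
  intro j hj
  by_cases hdd : p ^ Δ ∣ j
  · rw [if_pos hdd, if_pos hdd]
  · rw [if_neg hdd, if_neg hdd, eI_zero, mul_zero]

lemma Dfun_step (m M : ℕ) (hmM : m ≤ M) (g h : PowerSeries E) (k : ℕ)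
    (hd : (X : PowerSeries E) ^ (k * p ^ M) ∣ (h - eI p E (M - m) g)) :
    ∀ j < p ^ M, (X : PowerSeries E) ^ k ∣
      (Dfun p E M h j - (if p ^ (M - m) ∣ j then Dfun p E m g (j / p ^ (M - m)) else 0)) := by
  have hM : m + (M - m) = M := by omega
  have hdecomp : h - eI p E (M - m) g = ∑ j ∈ Finset.range (p ^ M), (1 + X) ^ j *
      eI p E M (Dfun p E M h j -
        (if p ^ (M - m) ∣ j then Dfun p E m g (j / p ^ (M - m)) else 0)) := by
    conv_lhs => rw [lemmaA_exists (p := p) M h, eI_decomp m (M - m) g, hM]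
    rw [← Finset.sum_sub_distrib]
    apply Finset.sum_congr rfl
    intro j hj
    rw [← mul_sub, eI_sub']
  rw [hdecomp] at hd
  exact (lemmaA_dvd_iff (p := p) M k _).mpr hd

end Alg2

/-- Colmez's expansion (prop `colmet+`): in a model `R` of `Ẽ⁺`, every `f ∈ Ẽ⁺` can be
written uniquely as `f = ∑_{i ∈ I} (1+X)^i a_i(f)` with `a_i(f) ∈ E[[X]]`, `a_i(f) → 0`;
moreover `val_X f - 1 < inf_i val_X (a_i f) ≤ val_X f`. -/
theorem colmez_expansion
    {p : ℕ} [Fact p.Prime] {E : Type*} [Field E] [CharP E p]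
    {R : Type*} [CommRing R]
    (v : R → EReal) (ι : ℕ → PowerSeries E →+* R)
    (hv_top : ∀ x : R, v x = ⊤ ↔ x = 0)
    (hv_add : ∀ x y : R, min (v x) (v y) ≤ v (x + y))
    (hv_mul : ∀ x y : R, v (x * y) = v x + v y)
    (hcompat : ∀ (n : ℕ) (f : PowerSeries E), ι n f = ι (n + 1) (expandP p E f))
    (hv_iota : ∀ (n : ℕ) (f : PowerSeries E) (c : ℕ),
      ((X : PowerSeries E) ^ c ∣ f) ↔ (((c : ℝ) / (p : ℝ) ^ n : ℝ) : EReal) ≤ v (ι n f))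
    (hdense : ∀ (x : R) (r : ℝ), ∃ (n : ℕ) (f : PowerSeries E), (r : EReal) ≤ v (x - ι n f))
    (hcomplete : ∀ u : ℕ → R,
      (∀ r : ℝ, ∃ N : ℕ, ∀ j ≥ N, ∀ j' ≥ N, (r : EReal) ≤ v (u j - u j')) →
      ∃ x : R, Tendsto (fun j => v (x - u j)) atTop (𝓝 ⊤))
    (x : R) :
    (∃! a : Iset p → PowerSeries E,
      (∀ r : ℝ, {i : Iset p | ¬ (r : EReal) ≤ v (ι 0 (a i))}.Finite) ∧
      (∀ r : ℝ, ∃ s : Finset (Iset p), ∀ t : Finset (Iset p), s ⊆ t →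
        (r : EReal) ≤ v (x - ∑ i ∈ t, onePlusXRat ι i * ι 0 (a i)))) ∧
    (∀ a : Iset p → PowerSeries E,
      ((∀ r : ℝ, {i : Iset p | ¬ (r : EReal) ≤ v (ι 0 (a i))}.Finite) ∧
       (∀ r : ℝ, ∃ s : Finset (Iset p), ∀ t : Finset (Iset p), s ⊆ t →
         (r : EReal) ≤ v (x - ∑ i ∈ t, onePlusXRat ι i * ι 0 (a i)))) →
      (⨅ i : Iset p, v (ι 0 (a i))) ≤ v x ∧
        (x ≠ 0 → v x < (⨅ i : Iset p, v (ι 0 (a i))) + 1)) := by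
  classical
  have hvneg : ∀ y : R, v (-y) = v y := v_neg v ι hv_mul hv_iota
  -- approximating sequence
  choose nseq fseq hnf using fun k : ℕ => hdense x (k : ℝ)
  set mseq : ℕ → ℕ := fun k => (Finset.range (k + 1)).sup nseq with hmseq
  have hmmono : ∀ {a b : ℕ}, a ≤ b → mseq a ≤ mseq b := by
    intro a b hab
    exact Finset.sup_mono (Finset.range_subset_range.mpr (by omega))
  have hnm : ∀ k, nseq k ≤ mseq k := fun k =>
    Finset.le_sup (Finset.mem_range.mpr (by omega))
  set g : ℕ → PowerSeries E := fun k => eI p E (mseq k - nseq k) (fseq k) with hgdef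
  have hg : ∀ k : ℕ, ((k : ℝ) : EReal) ≤ v (x - ι (mseq k) (g k)) := by
    intro k
    have h3 : ι (nseq k) (fseq k) = ι (mseq k) (g k) := by
      simp only [hgdef]
      have h1 := iota_eI ι hcompat (nseq k) (mseq k - nseq k) (fseq k)
      rwa [show nseq k + (mseq k - nseq k) = mseq k from by have := hnm k; omega] at h1
    rw [← h3]
    exact hnf k
  -- stage-k coefficients
  set α : ℕ → Iset p → PowerSeries E := fun k i =>
    if h : isLev (mseq k) i then Dfun p E (mseq k) (g k) (idx (mseq k) i) else 0 with hα
  have hstep : ∀ (k : ℕ) (i : Iset p), (X : PowerSeries E) ^ k ∣ (α (k + 1) i - α k i) := by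
    intro k i
    have hmM : mseq k ≤ mseq (k + 1) := hmmono (Nat.le_succ k)
    have hdv : ((k : ℝ) : EReal) ≤
        v (ι (mseq (k + 1)) (g (k + 1) - eI p E (mseq (k + 1) - mseq k) (g k))) := by
      rw [map_sub]
      have hι : ι (mseq (k + 1)) (eI p E (mseq (k + 1) - mseq k) (g k)) = ι (mseq k) (g k) := by
        have h1 := iota_eI ι hcompat (mseq k) (mseq (k + 1) - mseq k) (g k)
        rw [show mseq k + (mseq (k + 1) - mseq k) = mseq (k + 1) from by omega] at h1
        exact h1.symm
      rw [hι]
      have he : ι (mseq (k + 1)) (g (k + 1)) - ι (mseq k) (g k) =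
          (x - ι (mseq k) (g k)) + -(x - ι (mseq (k + 1)) (g (k + 1))) := by ring
      rw [he]
      apply v_add_ge v hv_add (hg k)
      rw [hvneg]
      refine le_trans ?_ (hg (k + 1))
      exact EReal.coe_le_coe_iff.mpr (by exact_mod_cast Nat.le_succ k)
    have hDs := Dfun_step (mseq k) (mseq (k + 1)) hmM (g k) (g (k + 1)) k
      ((v_le_iff_nat v ι hv_iota k (mseq (k + 1)) _).mpr hdv)
    by_cases hiM : isLev (mseq (k + 1)) i
    · have hidxM : idx (mseq (k + 1)) i < p ^ (mseq (k + 1)) := (idx_spec hiM).2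
      have h2 := hDs (idx (mseq (k + 1)) i) hidxM
      by_cases him : isLev (mseq k) i
      · have hrel : idx (mseq (k + 1)) i = idx (mseq k) i * p ^ (mseq (k + 1) - mseq k) :=
          idx_levmono him hmM
        have hdvd : p ^ (mseq (k + 1) - mseq k) ∣ idx (mseq (k + 1)) i := by
          rw [hrel]; exact dvd_mul_left _ _
        rw [if_pos hdvd] at h2
        have hdivq : idx (mseq (k + 1)) i / p ^ (mseq (k + 1) - mseq k) = idx (mseq k) i := by
          rw [hrel]
          exact Nat.mul_div_cancel _ (pow_pos (lt_trans one_pos (hp1 (p := p))) _)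
        rw [hdivq] at h2
        simp only [hα]
        rw [dif_pos hiM, dif_pos him]
        exact h2
      · have hndvd : ¬ p ^ (mseq (k + 1) - mseq k) ∣ idx (mseq (k + 1)) i := fun hdvd =>
          him (isLev_of_dvd hiM hmM hdvd)
        rw [if_neg hndvd] at h2
        simp only [hα]
        rw [dif_pos hiM, dif_neg him]
        exact h2
    · have him : ¬ isLev (mseq k) i := fun h => hiM (isLev_mono h hmM)
      simp only [hα]
      rw [dif_neg hiM, dif_neg him, sub_zero]
      exact dvd_zero _
  have htel : ∀ (k l : ℕ), k ≤ l → ∀ i, (X : PowerSeries E) ^ k ∣ (α l i - α k i) := by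
    intro k l hkl
    induction l with
    | zero =>
      intro i
      have hk0 : k = 0 := by omega
      subst hk0
      rw [sub_self]
      exact dvd_zero _
    | succ l ih =>
      intro i
      rcases Nat.lt_or_ge k (l + 1) with h | h
      · have hkl' : k ≤ l := by omega
        have h1 := ih hkl' i
        have h2 : (X : PowerSeries E) ^ k ∣ (α (l + 1) i - α l i) :=
          dvd_trans (pow_dvd_pow X hkl') (hstep l i)
        have he : α (l + 1) i - α k i = (α (l + 1) i - α l i) + (α l i - α k i) := by ring
        rw [he]
        exact dvd_add h2 h1
      · have hkeq : k = l + 1 := by omega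
        subst hkeq
        rw [sub_self]
        exact dvd_zero _
  set abar : Iset p → PowerSeries E := fun i =>
    PowerSeries.mk fun q => coeff (R := E) q (α (q + 1) i) with habar
  have halim : ∀ (k : ℕ) (i : Iset p), (X : PowerSeries E) ^ k ∣ (abar i - α k i) := by
    intro k i
    rw [X_pow_dvd_iff]
    intro q hq
    rw [map_sub]
    have h1 := htel (q + 1) k (by omega) i
    have h2 : coeff (R := E) q (α k i) - coeff (R := E) q (α (q + 1) i) = 0 := by
      have := X_pow_dvd_iff.mp h1 q (Nat.lt_succ_self q)
      rwa [map_sub] at this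
    have h3 : coeff (R := E) q (abar i) = coeff (R := E) q (α (q + 1) i) := by
      simp only [habar, coeff_mk]
    rw [h3]
    have h4 : coeff (R := E) q (α k i) = coeff (R := E) q (α (q + 1) i) := by
      have := sub_eq_zero.mp h2
      exact this
    rw [h4, sub_self]
  -- the partial sums at stage k recover ι (mseq k) (g k)
  have hrepr : ∀ (k : ℕ) (t : Finset (Iset p)), IFin (mseq k) ⊆ t →
      ∑ i ∈ t, onePlusXRat ι i * ι 0 (α k i) = ι (mseq k) (g k) := by
    intro k t hst
    rw [← Finset.sum_subset hst (fun i hit hins => by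
      have hni : ¬ isLev (mseq k) i := fun h => hins (mem_IFin.mpr h)
      simp only [hα]
      rw [dif_neg hni, map_zero, mul_zero])]
    rw [sum_repr ι hcompat _ _ (mseq k) (fun i hi => mem_IFin.mp hi)]
    conv_rhs => rw [lemmaA_exists (p := p) (mseq k) (g k)]
    congr 1
    apply Finset.sum_congr rfl
    intro j hj
    have hjlt := Finset.mem_range.mp hj
    rw [Afun_eq (IFin (mseq k)) (α k) (mseq k) j hjlt (fun i hi => mem_IFin.mp hi),
      if_pos (mem_IFin.mpr (isLev_mkI _ _ hjlt))]
    simp only [hα]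
    rw [dif_pos (isLev_mkI _ _ hjlt), idx_mkI]
  -- Condition 1 for abar
  have hC1 : ∀ r : ℝ, {i : Iset p | ¬ (r : EReal) ≤ v (ι 0 (abar i))}.Finite := by
    intro r
    obtain ⟨k, hk⟩ := exists_nat_ge r
    apply Set.Finite.subset (IFin (p := p) (mseq k)).finite_toSet
    intro i hi
    simp only [Set.mem_setOf_eq] at hi
    by_contra hni
    apply hi
    have hnl : ¬ isLev (mseq k) i := fun h => hni (Finset.mem_coe.mpr (mem_IFin.mpr h))
    have hz : α k i = 0 := by simp only [hα]; rw [dif_neg hnl]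
    have hdvd : (X : PowerSeries E) ^ (k * p ^ 0) ∣ abar i := by
      rw [pow_zero, mul_one]
      have := halim k i
      rwa [hz, sub_zero] at this
    have hvk := (v_le_iff_nat v ι hv_iota k 0 (abar i)).mp hdvd
    exact le_trans (EReal.coe_le_coe_iff.mpr hk) hvk
  -- Condition 2 for abar
  have hC2 : ∀ r : ℝ, ∃ s : Finset (Iset p), ∀ t : Finset (Iset p), s ⊆ t →
      (r : EReal) ≤ v (x - ∑ i ∈ t, onePlusXRat ι i * ι 0 (abar i)) := by
    intro r
    obtain ⟨k, hk⟩ := exists_nat_ge r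
    refine ⟨IFin (mseq k), fun t hst => ?_⟩
    have hdecomp : x - ∑ i ∈ t, onePlusXRat ι i * ι 0 (abar i) =
        (x - ι (mseq k) (g k)) + ∑ i ∈ t, onePlusXRat ι i * ι 0 (α k i - abar i) := by
      have h1 : ∑ i ∈ t, onePlusXRat ι i * ι 0 (α k i - abar i)
          = ∑ i ∈ t, onePlusXRat ι i * ι 0 (α k i)
            - ∑ i ∈ t, onePlusXRat ι i * ι 0 (abar i) := by
        rw [← Finset.sum_sub_distrib]
        apply Finset.sum_congr rfl
        intro i _
        rw [map_sub, mul_sub]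
      rw [h1, hrepr k t hst]
      ring
    rw [hdecomp]
    refine le_trans (EReal.coe_le_coe_iff.mpr hk) (v_add_ge v hv_add (hg k) ?_)
    apply v_sum_ge v hv_top hv_add
    intro i hit
    rw [hv_mul, v_onePlusXRat v ι hcompat hv_iota, zero_add]
    have hdvd : (X : PowerSeries E) ^ (k * p ^ 0) ∣ (α k i - abar i) := by
      rw [pow_zero, mul_one]
      have h5 : α k i - abar i = -(abar i - α k i) := by ring
      rw [h5]
      exact dvd_neg.mpr (halim k i)
    exact (v_le_iff_nat v ι hv_iota k 0 _).mp hdvd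
  -- Uniqueness from condition 2 alone
  have huniq : ∀ a1 a2 : Iset p → PowerSeries E,
      (∀ r : ℝ, ∃ s : Finset (Iset p), ∀ t : Finset (Iset p), s ⊆ t →
        (r : EReal) ≤ v (x - ∑ i ∈ t, onePlusXRat ι i * ι 0 (a1 i))) →
      (∀ r : ℝ, ∃ s : Finset (Iset p), ∀ t : Finset (Iset p), s ⊆ t →
        (r : EReal) ≤ v (x - ∑ i ∈ t, onePlusXRat ι i * ι 0 (a2 i))) →
      a1 = a2 := by
    intro a1 a2 h1 h2
    funext i₀
    have hdd : ∀ k : ℕ, (X : PowerSeries E) ^ k ∣ (a1 i₀ - a2 i₀) := by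
      intro k
      obtain ⟨s1, hs1⟩ := h1 (k : ℝ)
      obtain ⟨s2, hs2⟩ := h2 (k : ℝ)
      have hv1 := hs1 (insert i₀ (s1 ∪ s2))
        (subset_trans Finset.subset_union_left (Finset.subset_insert _ _))
      have hv2 := hs2 (insert i₀ (s1 ∪ s2))
        (subset_trans Finset.subset_union_right (Finset.subset_insert _ _))
      have hvd : ((k : ℝ) : EReal) ≤
          v (∑ i ∈ insert i₀ (s1 ∪ s2), onePlusXRat ι i * ι 0 (a1 i - a2 i)) := by
        have he : ∑ i ∈ insert i₀ (s1 ∪ s2), onePlusXRat ι i * ι 0 (a1 i - a2 i)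
            = (x - ∑ i ∈ insert i₀ (s1 ∪ s2), onePlusXRat ι i * ι 0 (a2 i))
              + -(x - ∑ i ∈ insert i₀ (s1 ∪ s2), onePlusXRat ι i * ι 0 (a1 i)) := by
          have hterm : ∀ i ∈ insert i₀ (s1 ∪ s2),
              onePlusXRat ι i * ι 0 (a1 i - a2 i) =
                onePlusXRat ι i * ι 0 (a1 i) - onePlusXRat ι i * ι 0 (a2 i) := by
            intro i _
            rw [map_sub, mul_sub]
          rw [Finset.sum_congr rfl hterm, Finset.sum_sub_distrib]
          ring
        rw [he]
        apply v_add_ge v hv_add hv2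
        rw [hvneg]
        exact hv1
      exact extract v ι hcompat hv_iota _ _ k i₀ (Finset.mem_insert_self _ _) hvd
    have h0 : a1 i₀ - a2 i₀ = 0 := eq_zero_of_forall_dvd hdd
    exact sub_eq_zero.mp h0
  -- Bounds
  refine ⟨⟨abar, ⟨hC1, hC2⟩, fun a' ha' => huniq a' abar ha'.2 hC2⟩, ?_⟩
  rintro a ⟨ha1, ha2⟩
  constructor
  · by_contra hlt
    rw [not_le] at hlt
    obtain ⟨r, hr1, hr2⟩ := EReal.exists_between_coe_real hlt
    obtain ⟨s, hs⟩ := ha2 r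
    have hv1 := hs s (subset_refl s)
    have hv2 : (⨅ i : Iset p, v (ι 0 (a i))) ≤
        v (∑ i ∈ s, onePlusXRat ι i * ι 0 (a i)) := by
      apply v_sum_ge v hv_top hv_add
      intro i _
      rw [hv_mul, v_onePlusXRat v ι hcompat hv_iota, zero_add]
      exact iInf_le _ i
    have he : x = (x - ∑ i ∈ s, onePlusXRat ι i * ι 0 (a i))
        + ∑ i ∈ s, onePlusXRat ι i * ι 0 (a i) := by ring
    have hcle : min (r : EReal) (⨅ i : Iset p, v (ι 0 (a i))) ≤ v x := by
      conv_rhs => rw [he]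
      exact v_add_ge v hv_add (le_trans (min_le_left _ _) hv1)
        (le_trans (min_le_right _ _) hv2)
    exact absurd hcle (not_le.mpr (lt_min hr1 hlt))
  · intro hx0
    have hex : ∃ i, ∃ q, coeff (R := E) q (a i) ≠ 0 := by
      by_contra hno
      push_neg at hno
      have hall0 : ∀ i, a i = 0 := fun i => by
        ext q
        rw [map_zero]
        exact hno i q
      have hforall : ∀ r : ℝ, (r : EReal) ≤ v x := by
        intro r
        obtain ⟨s, hs⟩ := ha2 r
        have h6 := hs s (subset_refl s)
        have hz : ∑ i ∈ s, onePlusXRat ι i * ι 0 (a i) = 0 :=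
          Finset.sum_eq_zero fun i _ => by rw [hall0 i, map_zero, mul_zero]
        rwa [hz, sub_zero] at h6
      exact hx0 ((hv_top x).mp (eq_top_of_forall_le hforall))
    have hP : ∃ k : ℕ, ∃ i, ¬ (X : PowerSeries E) ^ (k + 1) ∣ a i := by
      obtain ⟨i, q, hq⟩ := hex
      exact ⟨q, i, fun hd => hq (X_pow_dvd_iff.mp hd q (Nat.lt_succ_self q))⟩
    obtain ⟨i₀, hi₀⟩ := Nat.find_spec hP
    have hall : ∀ i, (X : PowerSeries E) ^ (Nat.find hP) ∣ a i := by
      intro i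
      rcases Nat.eq_zero_or_pos (Nat.find hP) with hk0 | hk0
      · rw [hk0, pow_zero]
        exact one_dvd _
      · have hlt' : Nat.find hP - 1 < Nat.find hP := by omega
        have h7 := Nat.find_min hP hlt'
        push_neg at h7
        have h8 := h7 i
        rwa [show Nat.find hP - 1 + 1 = Nat.find hP from by omega] at h8
    have hinf_ge : ((Nat.find hP : ℝ) : EReal) ≤ ⨅ i : Iset p, v (ι 0 (a i)) := by
      apply le_iInf
      intro i
      have hdvd : (X : PowerSeries E) ^ (Nat.find hP * p ^ 0) ∣ a i := by
        rw [pow_zero, mul_one]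
        exact hall i
      exact (v_le_iff_nat v ι hv_iota _ 0 _).mp hdvd
    have hvx_lt : ¬ (((Nat.find hP + 1 : ℕ) : ℝ) : EReal) ≤ v x := by
      intro hk1
      obtain ⟨s, hs⟩ := ha2 ((Nat.find hP + 1 : ℕ) : ℝ)
      have hv1 := hs (insert i₀ s) (Finset.subset_insert _ _)
      have hvS : (((Nat.find hP + 1 : ℕ) : ℝ) : EReal) ≤
          v (∑ i ∈ insert i₀ s, onePlusXRat ι i * ι 0 (a i)) := by
        have he : ∑ i ∈ insert i₀ s, onePlusXRat ι i * ι 0 (a i)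
            = x + -(x - ∑ i ∈ insert i₀ s, onePlusXRat ι i * ι 0 (a i)) := by ring
        rw [he]
        apply v_add_ge v hv_add hk1
        rw [hvneg]
        exact hv1
      exact hi₀ (extract v ι hcompat hv_iota _ _ _ i₀ (Finset.mem_insert_self _ _) hvS)
    rw [not_le] at hvx_lt
    have hfin : (((Nat.find hP + 1 : ℕ) : ℝ) : EReal) ≤
        (⨅ i : Iset p, v (ι 0 (a i))) + 1 := by
      have hcast : (((Nat.find hP + 1 : ℕ) : ℝ) : EReal)
          = ((Nat.find hP : ℝ) : EReal) + 1 := by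
        rw [Nat.cast_add, Nat.cast_one, EReal.coe_add, EReal.coe_one]
      rw [hcast]
      exact add_le_add_left hinf_ge 1
    exact lt_of_lt_of_le hvx_lt hfin
end
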